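/- arXiv:0708.3180 — 3 statements merged into one kernel-verified Lean document; each statement's English description precedes it below -/
import Mathlib

section
/- The Casimir operator is equivariant: for every x ∈ L and every v ∈ V one has C(x · v) = x · C(v); that is, the Casimir operator is a morphism of Lie modules from V to itself. -/
private lemma my_lie_sum {L V : Type*} [LieRing L] [AddCommGroup V] [LieRingModule L V]
    {ι : Type*} (x : L) (s : Finset ι) (m : ι → V) :
    ⁅x, ∑ i ∈ s, m i⁆ = ∑ i ∈ s, ⁅x, m i⁆ := by
  induction s using Finset.cons_induction with
  | empty => simp
  | cons a s ha ih => simp [Finset.sum_cons, lie_add, ih]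

private lemma my_sum_lie {L V : Type*} [LieRing L] [AddCommGroup V] [LieRingModule L V]
    {ι : Type*} (s : Finset ι) (y : ι → L) (m : V) :
    ⁅∑ i ∈ s, y i, m⁆ = ∑ i ∈ s, ⁅y i, m⁆ := by
  induction s using Finset.cons_induction with
  | empty => simp
  | cons a s ha ih => simp [Finset.sum_cons, add_lie, ih]

/-- The Casimir operator is equivariant: `C(x · v) = x · C(v)` for all `x ∈ L`, `v ∈ V`;
that is, the Casimir operator is a morphism of Lie modules from `V` to itself. -/
theorem casimir_equivariant
    {K : Type*} [Field K] {L : Type*} [LieRing L] [LieAlgebra K L]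
    [Module.Finite K L]
    {V : Type*} [AddCommGroup V] [Module K V] [LieRingModule L V] [LieModule K L V]
    (B : LinearMap.BilinForm K L)
    (hBsymm : ∀ x y : L, B x y = B y x)
    (hBinv : ∀ x y z : L, B ⁅x, y⁆ z = B x ⁅y, z⁆)
    (hBnd : B.Nondegenerate)
    {n : ℕ} (e : Module.Basis (Fin n) K L) (f : Fin n → L)
    (hf : ∀ i j, B (e i) (f j) = if i = j then 1 else 0)
    (x : L) (v : V) :
    ∑ i, ⁅e i, ⁅f i, ⁅x, v⁆⁆⁆ = ⁅x, ∑ i, ⁅e i, ⁅f i, v⁆⁆⁆ := by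
  classical
  -- expansion of any element in the basis `e` with coefficients via `f`
  have hA : ∀ y : L, y = ∑ j, B y (f j) • e j := by
    intro y
    have hcoef : ∀ j, B y (f j) = e.repr y j := by
      intro j
      conv_lhs => rw [← e.sum_repr y]
      rw [map_sum, LinearMap.sum_apply]
      simp [hf, map_smul]
    simp_rw [hcoef]
    exact (e.sum_repr y).symm
  -- expansion in terms of `f`, via nondegeneracy
  have hB2 : ∀ y : L, y = ∑ j, B (e j) y • f j := by
    intro y
    have h0 : ∀ z : L, B z (y - ∑ j, B (e j) y • f j) = 0 := by
      intro z
      have h1 : B z y = ∑ i, B z (f i) * B (e i) y := by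
        conv_lhs => rw [hA z]
        rw [map_sum, LinearMap.sum_apply]
        simp [smul_eq_mul]
      rw [map_sub, map_sum, h1]
      simp [smul_eq_mul, mul_comm]
    have := hBnd.1 (y - ∑ j, B (e j) y • f j) (fun z => by rw [hBsymm]; exact h0 z)
    rw [sub_eq_zero] at this
    exact this
  have expand : ⁅x, ∑ i, ⁅e i, ⁅f i, v⁆⁆⁆ =
      (∑ i, ⁅⁅x, e i⁆, ⁅f i, v⁆⁆) + ((∑ i, ⁅e i, ⁅⁅x, f i⁆, v⁆⁆) +
        ∑ i, ⁅e i, ⁅f i, ⁅x, v⁆⁆⁆) := by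
    rw [my_lie_sum, ← Finset.sum_add_distrib, ← Finset.sum_add_distrib]
    refine Finset.sum_congr rfl fun i _ => ?_
    rw [leibniz_lie x (e i) ⁅f i, v⁆, leibniz_lie x (f i) v, lie_add]
  have hS1 : ∑ i, ⁅⁅x, e i⁆, ⁅f i, v⁆⁆ =
      ∑ i, ∑ j, B ⁅x, e i⁆ (f j) • ⁅e j, ⁅f i, v⁆⁆ := by
    refine Finset.sum_congr rfl fun i _ => ?_
    conv_lhs => rw [hA ⁅x, e i⁆]
    rw [my_sum_lie]
    simp [smul_lie]
  have hS2 : ∑ i, ⁅e i, ⁅⁅x, f i⁆, v⁆⁆ =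
      ∑ i, ∑ j, (-(B ⁅x, e j⁆ (f i))) • ⁅e i, ⁅f j, v⁆⁆ := by
    refine Finset.sum_congr rfl fun i _ => ?_
    have hcoef : ∀ j, B (e j) ⁅x, f i⁆ = -(B ⁅x, e j⁆ (f i)) := by
      intro j
      rw [← hBinv (e j) x (f i)]
      have hsk : ⁅e j, x⁆ = -⁅x, e j⁆ := by rw [← lie_skew]
      rw [hsk, map_neg, LinearMap.neg_apply]
    conv_lhs => rw [hB2 ⁅x, f i⁆]
    rw [my_sum_lie]
    simp_rw [smul_lie, my_lie_sum, lie_smul, hcoef]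
  have hS2' : ∑ i, ∑ j, (-(B ⁅x, e j⁆ (f i))) • ⁅e i, ⁅f j, v⁆⁆ =
      -∑ i, ∑ j, B ⁅x, e i⁆ (f j) • ⁅e j, ⁅f i, v⁆⁆ := by
    rw [Finset.sum_comm]
    simp [neg_smul, ← Finset.sum_neg_distrib]
  rw [expand, hS1, hS2, hS2']
  abel
end

section
/- If K is algebraically closed and V is a nonzero finite-dimensional irreducible Lie module over L, then the Casimir operator acts on V by a scalar: there exists c ∈ K such that C(v) = c • v for all v ∈ V. -/
/-- Over an algebraically closed field, the Casimir operator acts by a scalar on any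
nonzero finite-dimensional irreducible Lie module. -/
theorem casimir_acts_by_scalar_on_irreducible
    {K : Type*} [Field K] [IsAlgClosed K] {L : Type*} [LieRing L] [LieAlgebra K L]
    [Module.Finite K L]
    {V : Type*} [AddCommGroup V] [Module K V] [LieRingModule L V] [LieModule K L V]
    [Module.Finite K V] [Nontrivial V]
    (hirr : ∀ N : LieSubmodule K L V, N = ⊥ ∨ N = ⊤)
    (B : LinearMap.BilinForm K L)
    (hBsymm : ∀ x y : L, B x y = B y x)
    (hBinv : ∀ x y z : L, B ⁅x, y⁆ z = B x ⁅y, z⁆)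
    (hBnd : B.Nondegenerate)
    {n : ℕ} (e : Module.Basis (Fin n) K L) (f : Fin n → L)
    (hf : ∀ i j, B (e i) (f j) = if i = j then 1 else 0) :
    ∃ c : K, ∀ v : V, ∑ i, ⁅e i, ⁅f i, v⁆⁆ = c • v := by
  classical
  -- expansion of any vector in the basis `e` with coefficients given by `B · (f j)`
  have repr_eq : ∀ (y : L) (j : Fin n), e.repr y j = B y (f j) := by
    intro y j
    conv_rhs => rw [← e.sum_repr y]
    rw [map_sum]
    simp [map_sum, hf, mul_ite, Finset.sum_ite_eq']
  have expand_e : ∀ y : L, y = ∑ j, B y (f j) • e j := by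
    intro y
    conv_lhs => rw [← e.sum_repr y]
    exact Finset.sum_congr rfl fun j _ => by rw [repr_eq]
  -- expansion of any vector with coefficients `B (e j) ·` in the family `f`
  have expand_f : ∀ y : L, y = ∑ j, B (e j) y • f j := by
    intro y
    have hz : ∀ i, B (e i) (y - ∑ j, B (e j) y • f j) = 0 := by
      intro i
      simp [map_sub, map_sum, hf, mul_ite, Finset.sum_ite_eq']
    have hz' : ∀ x : L, B x (y - ∑ j, B (e j) y • f j) = 0 := by
      intro x
      conv_lhs => rw [← e.sum_repr x]
      rw [map_sum]
      simp [hz]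
    have : y - ∑ j, B (e j) y • f j = 0 :=
      hBnd.1 _ fun m => by rw [hBsymm]; exact hz' m
    rw [sub_eq_zero] at this
    exact this
  -- key coefficient identity from invariance
  have coefeq : ∀ (x : L) (i j : Fin n), B ⁅x, e i⁆ (f j) = - B (e i) ⁅x, f j⁆ := by
    intro x i j
    rw [← hBinv (e i) x (f j), ← lie_skew, map_neg, LinearMap.neg_apply]
  have lie_sum' : ∀ (x : L) (g : Fin n → V), ⁅x, ∑ i, g i⁆ = ∑ i, ⁅x, g i⁆ := by
    intro x g
    exact map_sum (LieModule.toEnd K L V x) g Finset.univ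
  have sum_lie' : ∀ (g : Fin n → L) (w : V), ⁅∑ i, g i, w⁆ = ∑ i, ⁅g i, w⁆ := by
    intro g w
    have h : LieModule.toEnd K L V (∑ i, g i) = ∑ i, LieModule.toEnd K L V (g i) :=
      map_sum (LieModule.toEnd K L V) g Finset.univ
    calc ⁅∑ i, g i, w⁆ = LieModule.toEnd K L V (∑ i, g i) w := rfl
      _ = ∑ i, ⁅g i, w⁆ := by rw [h, LinearMap.sum_apply]; rfl
  -- the Casimir operator commutes with the action of L
  have comm : ∀ (x : L) (v : V),
      ⁅x, ∑ i, ⁅e i, ⁅f i, v⁆⁆⁆ = ∑ i, ⁅e i, ⁅f i, ⁅x, v⁆⁆⁆ := by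
    intro x v
    have hkey : ∑ i, ⁅⁅x, e i⁆, ⁅f i, v⁆⁆ = - ∑ i, ⁅e i, ⁅⁅x, f i⁆, v⁆⁆ := by
      have lhs_eq : ∑ i, ⁅⁅x, e i⁆, ⁅f i, v⁆⁆
          = ∑ i, ∑ j, B ⁅x, e i⁆ (f j) • ⁅e j, ⁅f i, v⁆⁆ := by
        refine Finset.sum_congr rfl fun i _ => ?_
        conv_lhs => rw [expand_e ⁅x, e i⁆]
        rw [sum_lie' (fun j => B ⁅x, e i⁆ (f j) • e j) ⁅f i, v⁆]
        exact Finset.sum_congr rfl fun j _ => by rw [smul_lie]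
      have rhs_eq : ∑ i, ⁅e i, ⁅⁅x, f i⁆, v⁆⁆
          = ∑ i, ∑ j, B (e j) ⁅x, f i⁆ • ⁅e i, ⁅f j, v⁆⁆ := by
        refine Finset.sum_congr rfl fun i _ => ?_
        conv_lhs => rw [expand_f ⁅x, f i⁆]
        rw [sum_lie', lie_sum']
        refine Finset.sum_congr rfl fun j _ => ?_
        rw [smul_lie, lie_smul]
      rw [lhs_eq, rhs_eq, ← Finset.sum_neg_distrib]
      rw [Finset.sum_comm]
      refine Finset.sum_congr rfl fun i _ => ?_
      rw [← Finset.sum_neg_distrib]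
      refine Finset.sum_congr rfl fun j _ => ?_
      rw [coefeq, neg_smul]
    calc ⁅x, ∑ i, ⁅e i, ⁅f i, v⁆⁆⁆
        = ∑ i, (⁅⁅x, e i⁆, ⁅f i, v⁆⁆ + ⁅e i, ⁅x, ⁅f i, v⁆⁆⁆) := by
          rw [lie_sum']; exact Finset.sum_congr rfl fun i _ => leibniz_lie x (e i) ⁅f i, v⁆
      _ = ∑ i, ⁅⁅x, e i⁆, ⁅f i, v⁆⁆ + ∑ i, ⁅e i, ⁅x, ⁅f i, v⁆⁆⁆ := Finset.sum_add_distrib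
      _ = ∑ i, ⁅e i, ⁅x, ⁅f i, v⁆⁆⁆ - ∑ i, ⁅e i, ⁅⁅x, f i⁆, v⁆⁆ := by
          rw [hkey]; abel
      _ = ∑ i, ⁅e i, ⁅f i, ⁅x, v⁆⁆⁆ := by
          rw [← Finset.sum_sub_distrib]
          refine Finset.sum_congr rfl fun i _ => ?_
          rw [← lie_sub]
          congr 1
          have := leibniz_lie x (f i) v
          rw [this]; abel
  -- the Casimir operator as an endomorphism
  set T : Module.End K V :=
    ∑ i, (LieModule.toEnd K L V (e i)) * (LieModule.toEnd K L V (f i)) with hTdef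
  have hT : ∀ v : V, T v = ∑ i, ⁅e i, ⁅f i, v⁆⁆ := by
    intro v
    simp [hTdef, LinearMap.sum_apply, Module.End.mul_apply, LieModule.toEnd_apply_apply]
  haveI : FiniteDimensional K V := ‹Module.Finite K V›
  obtain ⟨c, hc⟩ := Module.End.exists_eigenvalue T
  obtain ⟨v₀, hv₀⟩ := hc.exists_hasEigenvector
  -- the eigenspace is a Lie submodule
  let N : LieSubmodule K L V :=
    { Module.End.eigenspace T c with
      lie_mem := by
        intro x m hm
        have hm' : T m = c • m := Module.End.mem_eigenspace_iff.mp hm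
        show ⁅x, m⁆ ∈ Module.End.eigenspace T c
        rw [Module.End.mem_eigenspace_iff, hT, ← comm, ← hT m, hm', lie_smul] }
  have hv₀N : v₀ ∈ N := hv₀.1
  rcases hirr N with hbot | htop
  · exfalso
    rw [hbot] at hv₀N
    exact hv₀.2 (by simpa using hv₀N)
  · refine ⟨c, fun v => ?_⟩
    have hvN : v ∈ N := htop ▸ LieSubmodule.mem_top v
    have : T v = c • v := Module.End.mem_eigenspace_iff.mp hvN
    rw [← hT]; exact this
end

section
/- If the Killing form κ of L is nondegenerate, then for every i ∈ ℤ the filtration component 𝔤^i := ∑_{j ≥ i} 𝔤ⱼ is exactly the annihilator of 𝔤^{-i+1} with respect to κ: {x ∈ L : κ(x,y) = 0 for all y ∈ 𝔤^{-i+1}} = 𝔤^i. -/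
section aux

variable {K : Type*} [Field K] [CharZero K] {L : Type*} [LieRing L] [LieAlgebra K L]
    [Module.Finite K L]
    (𝔤 : ℤ → Submodule K L) (hdecomp : DirectSum.IsInternal 𝔤)
    (hgr : ∀ i j : ℤ, ∀ x ∈ 𝔤 i, ∀ y ∈ 𝔤 j, ⁅x, y⁆ ∈ 𝔤 (i + j))

include hdecomp hgr in
lemma killing_orth_aux {a b : ℤ} (hab : a + b ≠ 0) {x y : L}
    (hx : x ∈ 𝔤 a) (hy : y ∈ 𝔤 b) : killingForm K L x y = 0 := by
  rw [killingForm_apply_apply]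
  let σ : ℤ → ℤ := fun c ↦ a + (b + c)
  have hσ : ∀ c, σ c ≠ c := by intro c; simp only [σ]; omega
  have hf : ∀ c, Set.MapsTo (LieAlgebra.ad K L x ∘ₗ LieAlgebra.ad K L y)
      (𝔤 c) (𝔤 (σ c)) := by
    intro c z hz
    exact hgr a (b + c) x hx _ (hgr b c y hy z hz)
  exact LinearMap.trace_eq_zero_of_mapsTo_ne hdecomp σ hσ hf

end aux

/-- If the Killing form `κ` of a ℤ-graded finite-dimensional Lie algebra is nondegenerate,
then the filtration component `𝔤^i := ∑_{j ≥ i} 𝔤ⱼ` is exactly the annihilator of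
`𝔤^{-i+1}` with respect to `κ`. -/
theorem filtration_component_eq_killing_annihilator
    {K : Type*} [Field K] [CharZero K] {L : Type*} [LieRing L] [LieAlgebra K L]
    [Module.Finite K L]
    (𝔤 : ℤ → Submodule K L) (hdecomp : DirectSum.IsInternal 𝔤)
    (hgr : ∀ i j : ℤ, ∀ x ∈ 𝔤 i, ∀ y ∈ 𝔤 j, ⁅x, y⁆ ∈ 𝔤 (i + j))
    (hnd : (killingForm K L).Nondegenerate)
    (i : ℤ) (x : L) :
    (∀ y ∈ (⨆ l ≥ -i + 1, 𝔤 l), killingForm K L x y = 0) ↔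
      x ∈ (⨆ l ≥ i, 𝔤 l) := by
  -- orthogonality of graded pieces
  have orth : ∀ {a b : ℤ}, a + b ≠ 0 → ∀ {x y : L}, x ∈ 𝔤 a → y ∈ 𝔤 b →
      killingForm K L x y = 0 := by
    intro a b h x' y' hx' hy'
    exact killing_orth_aux 𝔤 hdecomp hgr h hx' hy'
  -- any element of ⨆ l ∈ S, 𝔤 l kills any element of 𝔤 b provided degrees don't cancel
  have key : ∀ (S : Set ℤ) (b : ℤ), (∀ a ∈ S, a + b ≠ 0) →
      ∀ x' ∈ (⨆ l ∈ S, 𝔤 l), ∀ y ∈ 𝔤 b, killingForm K L x' y = 0 := by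
    intro S b hS x' hx' y hy
    have : (⨆ l ∈ S, 𝔤 l) ≤ LinearMap.ker ((killingForm K L).flip y) := by
      refine iSup₂_le fun a ha z hz ↦ ?_
      simpa using orth (hS a ha) hz hy
    simpa using this hx'
  constructor
  · -- forward direction
    intro h
    -- split x into its part in degrees ≥ i and degrees < i
    have htop : x ∈ (⨆ l ≥ i, 𝔤 l) ⊔ (⨆ l < i, 𝔤 l) := by
      have : (⊤ : Submodule K L) ≤ (⨆ l ≥ i, 𝔤 l) ⊔ (⨆ l < i, 𝔤 l) := by
        rw [← hdecomp.submodule_iSup_eq_top]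
        refine iSup_le fun l ↦ ?_
        rcases le_or_gt i l with hl | hl
        · exact le_trans (le_iSup₂ (f := fun l _ ↦ 𝔤 l) l hl) le_sup_left
        · exact le_trans (le_iSup₂ (f := fun l (_ : l < i) ↦ 𝔤 l) l hl) le_sup_right
      exact this trivial
    obtain ⟨p, hp, q, hq, hpq⟩ := Submodule.mem_sup.mp htop
    -- show q = 0 using nondegeneracy
    have hq0 : q = 0 := by
      apply hnd.1
      intro y
      -- suffices to check on each graded piece
      have hy : ∀ b : ℤ, ∀ y ∈ 𝔤 b, killingForm K L q y = 0 := by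
        intro b y hy
        rcases le_or_gt (-i + 1) b with hb | hb
        · -- q = x - p; κ x y = 0 by hypothesis, κ p y = 0 since degrees don't cancel
          have hxy : killingForm K L x y = 0 :=
            h y (le_iSup₂ (f := fun l (_ : l ≥ -i + 1) ↦ 𝔤 l) b hb hy)
          have hpy : killingForm K L p y = 0 :=
            key {l | l ≥ i} b (fun a ha ↦ by simp at ha; omega) p hp y hy
          have : q = x - p := by rw [← hpq]; abel
          rw [this]
          simp [hxy, hpy]
        · exact key {l | l < i} b (fun a ha ↦ by simp at ha; omega) q hq y hy
      have : (⊤ : Submodule K L) ≤ LinearMap.ker (killingForm K L q) := by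
        rw [← hdecomp.submodule_iSup_eq_top]
        refine iSup_le fun b z hz ↦ ?_
        simpa using hy b z hz
      simpa using this (Submodule.mem_top : y ∈ ⊤)
    rw [← hpq, hq0, add_zero]
    exact hp
  · -- backward direction
    intro hx y hy
    have : (⨆ l ≥ -i + 1, 𝔤 l) ≤ LinearMap.ker (killingForm K L x) := by
      refine iSup₂_le fun b hb z hz ↦ ?_
      have hxz : ∀ a : ℤ, a ≥ i → ∀ x' ∈ 𝔤 a, killingForm K L x' z = 0 := by
        intro a ha x' hx'
        exact orth (by omega) hx' hz
      have : (⨆ l ≥ i, 𝔤 l) ≤ LinearMap.ker ((killingForm K L).flip z) := by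
        refine iSup₂_le fun a ha w hw ↦ ?_
        simpa using hxz a ha w hw
      simpa using this hx
    simpa using this hy
end
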